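/- arXiv:2410.00444 — 2 statements merged into one kernel-verified Lean document; each statement's English description precedes it below -/
import Mathlib

section
/- Let R be a prime ring with extended centroid C, and let a, b in R be such that [a, b] is a nonzero central element. If char R = 2 and RC is 4-dimensional over C, then both a and b lie in [RC, RC]. -/
/-!
Setting for a prime ring `R` with extended centroid `C` and central closure `RC`:
we model the central closure `RC` as a unital `C`-algebra `Q` whose center is exactly
`C·1`, together with a (not necessarily unital) subring `R` of `Q` that is prime and
whose `C`-span is all of `Q` (so that `Q = RC`).
-/

/-- The additive subgroup generated by commutators `a*b - b*a` with `a ∈ A`, `b ∈ B`. -/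
def commSG (Q : Type*) [Ring Q] (A B : Set Q) : AddSubgroup Q :=
  AddSubgroup.closure {x | ∃ a ∈ A, ∃ b ∈ B, x = a * b - b * a}

/-- `R` is a prime subring of `Q`. -/
def IsPrimeSubring {Q : Type*} [Ring Q] (R : NonUnitalSubring Q) : Prop :=
  ∀ a ∈ R, ∀ b ∈ R, (∀ x ∈ R, a * x * b = 0) → a = 0 ∨ b = 0

/-- `Q` is the central closure of `R` with extended centroid `C`. -/
def IsCentralClosure (C Q : Type*) [Field C] [Ring Q] [Algebra C Q]
    (R : NonUnitalSubring Q) : Prop :=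
  IsPrimeSubring R ∧ Submodule.span C (R : Set Q) = ⊤ ∧
    Set.center Q = Set.range (algebraMap C Q)

/-- `L` is a Lie ideal of the subring `R` of `Q`. -/
def IsLieIdealOf {Q : Type*} [Ring Q] (R : NonUnitalSubring Q) (L : AddSubgroup Q) : Prop :=
  (L : Set Q) ⊆ (R : Set Q) ∧ ∀ a ∈ L, ∀ r ∈ R, a * r - r * a ∈ L

/-- `L` is not contained in the center of `R`. -/
def IsNoncentral {Q : Type*} [Ring Q] (R : NonUnitalSubring Q) (L : AddSubgroup Q) : Prop :=
  ∃ a ∈ L, ∃ r ∈ R, a * r ≠ r * a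

/-- `R` is exceptional: `char R = 2` and `dim_C RC = 4`. -/
def IsExceptional (C Q : Type*) [Field C] [Ring Q] [Algebra C Q]
    (R : NonUnitalSubring Q) : Prop :=
  (∀ x ∈ R, x + x = 0) ∧ Module.finrank C Q = 4

/-- The set `Ca + C = {α • a + β·1 : α, β ∈ C}`. -/
def CaC (C : Type*) {Q : Type*} [Field C] [Ring Q] [Algebra C Q] (a : Q) : Set Q :=
  {x : Q | ∃ α β : C, x = α • a + algebraMap C Q β}

/-- exceptional prime ring, 0 ≠ [a,b] ∈ Z(R) implies a, b ∈ [RC, RC]. -/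
theorem stmt14 (C Q : Type*) [Field C] [Ring Q] [Algebra C Q] (R : NonUnitalSubring Q)
    (hcc : IsCentralClosure C Q R)
    (hchar : ∀ x ∈ R, x + x = 0) (hdim : Module.finrank C Q = 4)
    (a b : Q) (ha : a ∈ R) (hb : b ∈ R)
    (hne : a * b - b * a ≠ 0)
    (hcentral : ∀ y ∈ R, (a * b - b * a) * y = y * (a * b - b * a)) :
    a ∈ commSG Q Set.univ Set.univ ∧ b ∈ commSG Q Set.univ Set.univ := by
  obtain ⟨hprime, hspan, hcenter⟩ := hcc
  have hcomm : ∀ y : Q, (a * b - b * a) * y = y * (a * b - b * a) := by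
    intro y
    have hy : y ∈ Submodule.span C (R : Set Q) := by rw [hspan]; exact Submodule.mem_top
    induction hy using Submodule.span_induction with
    | mem x hx => exact hcentral x hx
    | zero => simp
    | add x z _ _ hx hz => rw [mul_add, add_mul, hx, hz]
    | smul c x _ hx => rw [mul_smul_comm, smul_mul_assoc, hx]
  have hz : a * b - b * a ∈ Set.center Q :=
    Semigroup.mem_center_iff.mpr (fun g => (hcomm g).symm)
  rw [hcenter] at hz
  obtain ⟨c, hc⟩ := hz
  have hc0 : c ≠ 0 := by
    rintro rfl
    exact hne (by simpa using hc.symm)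
  constructor
  · have key : a = a * (c⁻¹ • (b * a)) - (c⁻¹ • (b * a)) * a := by
      rw [mul_smul_comm, smul_mul_assoc, ← smul_sub]
      have h1 : a * (b * a) - b * a * a = (a * b - b * a) * a := by
        rw [sub_mul, mul_assoc, mul_assoc]
      rw [h1, ← hc, ← Algebra.smul_def, smul_smul, inv_mul_cancel₀ hc0, one_smul]
    exact key ▸ AddSubgroup.subset_closure
      ⟨a, Set.mem_univ a, c⁻¹ • (b * a), Set.mem_univ _, rfl⟩
  · have key : b = (c⁻¹ • (a * b)) * b - b * (c⁻¹ • (a * b)) := by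
      rw [mul_smul_comm, smul_mul_assoc, ← smul_sub]
      have h1 : a * b * b - b * (a * b) = (a * b - b * a) * b := by
        rw [sub_mul, mul_assoc, mul_assoc]
      rw [h1, ← hc, ← Algebra.smul_def, smul_smul, inv_mul_cancel₀ hc0, one_smul]
    exact key ▸ AddSubgroup.subset_closure
      ⟨c⁻¹ • (a * b), Set.mem_univ _, b, Set.mem_univ b, rfl⟩
end

section
/- Let R be a prime ring with extended centroid C and let L be a noncentral Lie ideal of R. Then the following are equivalent: (i) [L, L] = 0; (ii) char R = 2, dim_C RC = 4, and LC = [a, RC] = Ca + C for every noncentral a in L; (iii) dim_C(LC) = 2. -/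
section Aux

open Submodule
variable {C Q : Type*} [Field C] [Ring Q] [Algebra C Q]

private theorem spanR_ind {R : NonUnitalSubring Q} (hsp : Submodule.span C (R : Set Q) = ⊤)
    {p : Q → Prop} (mem : ∀ r ∈ R, p r) (zero : p 0)
    (add : ∀ x y, p x → p y → p (x + y)) (smul : ∀ (c : C) (x), p x → p (c • x)) (x : Q) :
    p x := by
  have hx : x ∈ Submodule.span C (R : Set Q) := by rw [hsp]; trivial
  exact Submodule.span_induction (fun r hr => mem r hr) zero
    (fun u v _ _ hu hv => add u v hu hv) (fun c u _ hu => smul c u hu) hx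

private theorem bracket_mem {R : NonUnitalSubring Q} {L : AddSubgroup Q}
    (hsp : Submodule.span C (R : Set Q) = ⊤)
    (hLie : ∀ a ∈ L, ∀ r ∈ R, a * r - r * a ∈ L) :
    ∀ x : Q, ∀ u ∈ Submodule.span C (L : Set Q),
      u * x - x * u ∈ Submodule.span C (L : Set Q) := by
  intro x
  induction x using spanR_ind (hsp := hsp) with
  | mem r hr =>
    intro u hu
    induction hu using Submodule.span_induction with
    | mem l hl => exact Submodule.subset_span (hLie l hl r hr)
    | zero => simp
    | add u v _ _ hu hv =>
      have e : (u + v) * r - r * (u + v) = (u * r - r * u) + (v * r - r * v) := by noncomm_ring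
      rw [e]; exact Submodule.add_mem _ hu hv
    | smul c u _ hu =>
      have e : (c • u) * r - r * (c • u) = c • (u * r - r * u) := by
        rw [smul_mul_assoc, mul_smul_comm, smul_sub]
      rw [e]; exact Submodule.smul_mem _ _ hu
  | zero => intro u hu; simp
  | add x y hx hy =>
    intro u hu
    have e : u * (x + y) - (x + y) * u = (u * x - x * u) + (u * y - y * u) := by noncomm_ring
    rw [e]; exact Submodule.add_mem _ (hx u hu) (hy u hu)
  | smul c x hx =>
    intro u hu
    have e : u * (c • x) - (c • x) * u = c • (u * x - x * u) := by
      rw [mul_smul_comm, smul_mul_assoc, smul_sub]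
    rw [e]; exact Submodule.smul_mem _ _ (hx u hu)

private theorem span_comm {L : AddSubgroup Q}
    (hI : ∀ a ∈ L, ∀ b ∈ L, a * b = b * a) :
    ∀ u ∈ Submodule.span C (L : Set Q), ∀ v ∈ Submodule.span C (L : Set Q), u * v = v * u := by
  intro u hu v hv
  induction hu, hv using Submodule.span_induction₂ with
  | mem_mem x y hx hy => exact hI x hx y hy
  | zero_left y hy => simp
  | zero_right x hx => simp
  | add_left x y z _ _ _ h1 h2 => rw [add_mul, mul_add, h1, h2]
  | add_right x y z _ _ _ h1 h2 => rw [mul_add, add_mul, h1, h2]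
  | smul_left c x y _ _ h => rw [smul_mul_assoc, mul_smul_comm, h]
  | smul_right c x y _ _ h => rw [mul_smul_comm, smul_mul_assoc, h]


/-- Main structural lemma, under hypothesis (i). -/
private theorem mainI {R : NonUnitalSubring Q} {L : AddSubgroup Q}
    (hpr : IsPrimeSubring R)
    (hsp : Submodule.span C (R : Set Q) = ⊤)
    (hcen : Set.center Q = Set.range (algebraMap C Q))
    (hLR : (L : Set Q) ⊆ (R : Set Q))
    (hLie : ∀ a ∈ L, ∀ r ∈ R, a * r - r * a ∈ L)
    (hI : ∀ a ∈ L, ∀ b ∈ L, a * b = b * a)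
    {a r₀ : Q} (haL : a ∈ L) (hr₀ : r₀ ∈ R) (hnc0 : a * r₀ ≠ r₀ * a) :
    (∀ x : Q, x + x = 0) ∧ Module.finrank C Q = 4 ∧
      ((Submodule.span C (L : Set Q) : Set Q) = {x : Q | ∃ y : Q, x = a * y - y * a} ∧
        (Submodule.span C (L : Set Q) : Set Q) = CaC C a) := by
  classical
  set M : Submodule C Q := Submodule.span C (L : Set Q) with hM
  obtain ⟨d, hd⟩ : ∃ d : Q → Q, ∀ x, d x = a * x - x * a :=
    ⟨fun x => a * x - x * a, fun _ => rfl⟩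
  have haM : a ∈ M := Submodule.subset_span haL
  have hMQ : ∀ x : Q, ∀ u ∈ M, u * x - x * u ∈ M := bracket_mem hsp hLie
  have hMM : ∀ u ∈ M, ∀ v ∈ M, u * v = v * u := span_comm hI
  have hd_mem : ∀ x : Q, d x ∈ M := by
    intro x
    rw [hd]
    exact hMQ x a haM
  have hder : ∀ p q : Q, d (p * q) = d p * q + p * d q := by
    intro p q; rw [hd, hd, hd]; noncomm_ring
  have hd_add : ∀ p q : Q, d (p + q) = d p + d q := by
    intro p q; rw [hd, hd, hd]; noncomm_ring
  have hd_sub : ∀ p q : Q, d (p - q) = d p - d q := by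
    intro p q; rw [hd, hd, hd]; noncomm_ring
  have hd_smul : ∀ (c : C) (p : Q), d (c • p) = c • d p := by
    intro c p; rw [hd, hd, mul_smul_comm, smul_mul_assoc, smul_sub]
  have hd_zero : d 0 = 0 := by rw [hd]; simp
  have hdd : ∀ x : Q, d (d x) = 0 := by
    intro x
    rw [hd (d x), sub_eq_zero]
    exact hMM a haM (d x) (hd_mem x)
  have hcd : ∀ p q : Q, d p * d q = d q * d p :=
    fun p q => hMM (d p) (hd_mem p) (d q) (hd_mem q)
  have haR : a ∈ R := hLR haL
  have hvR : d r₀ ∈ R := by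
    rw [hd]; exact R.sub_mem (R.mul_mem haR hr₀) (R.mul_mem hr₀ haR)
  have hv0 : d r₀ ≠ 0 := by rw [hd]; exact sub_ne_zero.mpr hnc0
  -- characteristic two
  have hC2 : (1 + 1 : C) = 0 := by
    by_contra hC
    have K : ∀ x y : Q, d x * d y + d x * d y = 0 := by
      intro x y
      have h0 := hdd (x * y)
      rw [hder x y, hd_add, hder, hder, hdd x, hdd y] at h0
      rw [zero_mul, mul_zero, zero_add, add_zero] at h0
      exact h0
    have hz : ∀ x y : Q, d x * d y = 0 := by
      intro x y
      have h1 : (1 + 1 : C) • (d x * d y) = 0 := by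
        rw [add_smul, one_smul]; exact K x y
      rcases smul_eq_zero.mp h1 with h | h
      · exact absurd h hC
      · exact h
    have hvsv : ∀ s : Q, d r₀ * s * d r₀ = 0 := by
      intro s
      have h1 := hz r₀ (s * r₀)
      rw [hder s r₀] at h1
      linear_combination (norm := noncomm_ring) h1 - (hz r₀ s) * r₀
    rcases hpr (d r₀) hvR (d r₀) hvR (fun s _ => hvsv s) with h | h <;> exact hv0 h
  have h2 : ∀ x : Q, x + x = 0 := by
    intro x
    calc x + x = (1 + 1 : C) • x := by rw [add_smul, one_smul]
    _ = 0 := by rw [hC2, zero_smul]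
  -- squares of elements of M are central scalars
  have hsq : ∀ u ∈ M, ∃ μ : C, u * u = algebraMap C Q μ := by
    intro u hu
    have hcen' : u * u ∈ Set.center Q := by
      rw [Semigroup.mem_center_iff]
      intro g
      have e1 : (u * u) * g - g * (u * u) = u * (u * g - g * u) + (u * g - g * u) * u := by
        noncomm_ring
      have e2 : u * (u * g - g * u) = (u * g - g * u) * u := hMM u hu _ (hMQ g u hu)
      have e3 : (u * u) * g - g * (u * u) = 0 := by rw [e1, e2]; exact h2 _
      have := sub_eq_zero.mp e3
      exact this.symm
    rw [hcen] at hcen'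
    obtain ⟨μ, hμ⟩ := hcen'
    exact ⟨μ, hμ.symm⟩
  -- the fundamental identity
  have hPhi : ∀ s x : Q, d s * x * d s = d x * d (s * s) + x * (d s * d s) := by
    intro s x
    have hc := hcd (x * s) s
    rw [hder x s] at hc
    rw [hder s s]
    linear_combination (norm := noncomm_ring) -hc - (hcd s x) * s - h2 (d x * (d s * s))
  -- existence of z in d(Q) with nonzero square
  have hz : ∃ z₀ : Q, d z₀ * d z₀ ≠ 0 := by
    by_contra hN
    push_neg at hN
    have hxy : ∃ x₀ ∈ R, ∃ y₀ ∈ R, d x₀ * d y₀ ≠ 0 := by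
      by_contra hA
      push_neg at hA
      have hall : ∀ x y : Q, d x * d y = 0 := by
        have inner : ∀ x ∈ R, ∀ y : Q, d x * d y = 0 := by
          intro x hx
          intro y
          induction y using spanR_ind (hsp := hsp) with
          | mem r hr => exact hA x hx r hr
          | zero => rw [hd_zero, mul_zero]
          | add p q hp hq => rw [hd_add, mul_add, hp, hq, add_zero]
          | smul c p hp => rw [hd_smul, mul_smul_comm, hp, smul_zero]
        intro x
        induction x using spanR_ind (hsp := hsp) with
        | mem r hr => exact inner r hr
        | zero => intro y; rw [hd_zero, zero_mul]
        | add p q hp hq => intro y; rw [hd_add, add_mul, hp, hq, add_zero]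
        | smul c p hp => intro y; rw [hd_smul, smul_mul_assoc, hp, smul_zero]
      have hvsv : ∀ s : Q, d r₀ * s * d r₀ = 0 := by
        intro s
        have h1 := hPhi r₀ s
        rw [hall s (r₀ * r₀), hall r₀ r₀, mul_zero, add_zero] at h1
        exact h1
      rcases hpr (d r₀) hvR (d r₀) hvR (fun s _ => hvsv s) with h | h <;> exact hv0 h
    obtain ⟨x₀, hx₀, y₀, hy₀, hg⟩ := hxy
    have hgw : d (x₀ * d y₀) = d x₀ * d y₀ := by
      rw [hder, hdd y₀, mul_zero, add_zero]
    have hww : (x₀ * d y₀) * (x₀ * d y₀) = x₀ * (d x₀ * d (y₀ * y₀)) := by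
      have h1 := hPhi y₀ x₀
      rw [hN y₀, mul_zero, add_zero] at h1
      linear_combination (norm := noncomm_ring) x₀ * h1
    have h6 : d (d x₀ * d (y₀ * y₀)) = 0 := by
      rw [hder (d x₀) (d (y₀ * y₀)), hdd x₀, hdd (y₀ * y₀), zero_mul, mul_zero, add_zero]
    have hdww : d ((x₀ * d y₀) * (x₀ * d y₀)) = 0 := by
      rw [hww, hder x₀ (d x₀ * d (y₀ * y₀)), h6, mul_zero, add_zero, ← mul_assoc, hN x₀,
        zero_mul]
    have hgxg : ∀ x : Q, (d x₀ * d y₀) * x * (d x₀ * d y₀) = 0 := by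
      intro x
      have h5 := hPhi (x₀ * d y₀) x
      rw [hgw, hdww, mul_zero, zero_add] at h5
      have hgg : (d x₀ * d y₀) * (d x₀ * d y₀) = 0 := by rw [← hgw]; exact hN _
      rw [hgg, mul_zero] at h5
      exact h5
    have hdx₀R : d x₀ ∈ R := by
      rw [hd]; exact R.sub_mem (R.mul_mem haR hx₀) (R.mul_mem hx₀ haR)
    have hdy₀R : d y₀ ∈ R := by
      rw [hd]; exact R.sub_mem (R.mul_mem haR hy₀) (R.mul_mem hy₀ haR)
    have hgR : d x₀ * d y₀ ∈ R := R.mul_mem hdx₀R hdy₀R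
    rcases hpr _ hgR _ hgR (fun s _ => hgxg s) with h | h <;> exact hg h
  obtain ⟨z₀, hz₀⟩ := hz
  obtain ⟨μ, hμ⟩ := hsq (d z₀) (hd_mem z₀)
  have hμ0 : μ ≠ 0 := by
    rintro rfl
    rw [map_zero] at hμ
    exact hz₀ hμ
  -- everything commuting with a is in the image of d
  have hAd : ∀ x : Q, a * x = x * a → ∃ y : Q, x = d y := by
    intro x hx
    have hdx : d x = 0 := by rw [hd, hx, sub_self]
    have h1 : d (x * z₀) = x * d z₀ := by rw [hder, hdx, zero_mul, zero_add]
    have h3 : d z₀ * (x * d z₀) = (x * d z₀) * d z₀ :=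
      hMM (d z₀) (hd_mem z₀) _ (h1 ▸ hd_mem (x * z₀))
    have h4 : d (d z₀ * (x * z₀)) = d z₀ * (x * d z₀) := by
      rw [hder, hdd z₀, zero_mul, zero_add, h1]
    have h5 : (x * d z₀) * d z₀ = μ • x := by
      rw [mul_assoc, hμ, ← Algebra.commutes μ x, ← Algebra.smul_def]
    refine ⟨μ⁻¹ • (d z₀ * (x * z₀)), ?_⟩
    rw [hd_smul, h4, h3, h5, smul_smul, inv_mul_cancel₀ hμ0, one_smul]
  have hA_M : ∀ x : Q, a * x = x * a → x ∈ M := by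
    intro x hx
    obtain ⟨y, hy⟩ := hAd x hx
    exact hy ▸ hd_mem y
  have hMA : ∀ u ∈ M, a * u = u * a := fun u hu => hMM a haM u hu
  -- an element y₁ with d y₁ = 1
  obtain ⟨y₁, hy₁⟩ : ∃ y₁ : Q, (1 : Q) = d y₁ := hAd 1 (by rw [mul_one, one_mul])
  have hdy₁ : d y₁ = 1 := hy₁.symm
  -- decomposition of Q
  have hdec : ∀ q : Q, a * (q - d q * y₁) = (q - d q * y₁) * a := by
    intro q
    have e : d (q - d q * y₁) = 0 := by
      rw [hd_sub, hder, hdd q, hdy₁, zero_mul, zero_add, mul_one, sub_self]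
    rw [hd] at e
    exact (sub_eq_zero.mp e)
  have hAcomm : ∀ x y : Q, a * x = x * a → a * y = y * a → x * y = y * x :=
    fun x y hx hy => hMM x (hA_M x hx) y (hA_M y hy)
  -- elements of A commuting with y₁ are central scalars
  have hKer : ∀ c : Q, a * c = c * a → c * y₁ = y₁ * c → ∃ γ : C, c = algebraMap C Q γ := by
    intro c hcA hcy
    have hcenc : c ∈ Set.center Q := by
      rw [Semigroup.mem_center_iff]
      intro g
      have h1 : c * (g - d g * y₁) = (g - d g * y₁) * c := hAcomm c _ hcA (hdec g)
      have h2' : c * d g = d g * c := hMM c (hA_M c hcA) (d g) (hd_mem g)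
      have h3 : c * (d g * y₁) = (d g * y₁) * c := by
        rw [← mul_assoc, h2', mul_assoc, hcy, ← mul_assoc]
      have h4 : c * g = c * ((g - d g * y₁) + d g * y₁) := by rw [sub_add_cancel]
      rw [h4, mul_add, h1, h3, ← add_mul, sub_add_cancel]
    rw [hcen] at hcenc
    obtain ⟨γ, hγ⟩ := hcenc
    exact ⟨γ, hγ.symm⟩
  -- centralizer of a is C + Ca
  have hy₁sq : a * (y₁ * y₁) = (y₁ * y₁) * a := by
    have e : d (y₁ * y₁) = 0 := by
      rw [hder, hdy₁, mul_one, one_mul]; exact h2 y₁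
    rw [hd] at e
    exact sub_eq_zero.mp e
  have hCaCmem : ∀ x : Q, a * x = x * a → ∃ γ β : C, x = γ • a + algebraMap C Q β := by
    intro x hx
    have hwA : a * (x * y₁ - y₁ * x) = (x * y₁ - y₁ * x) * a :=
      hMA _ (hMQ y₁ x (hA_M x hx))
    have hw2 : (x * y₁ - y₁ * x) * y₁ = y₁ * (x * y₁ - y₁ * x) := by
      have hcx : x * (y₁ * y₁) = (y₁ * y₁) * x := hAcomm x _ hx hy₁sq
      linear_combination (norm := noncomm_ring) hcx + h2 (y₁ * y₁ * x) - h2 (y₁ * (x * y₁))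
    obtain ⟨γ, hγ⟩ := hKer _ hwA hw2
    have hδa : a * y₁ - y₁ * a = 1 := by rw [← hd]; exact hdy₁
    have hx'A : a * (x - γ • a) = (x - γ • a) * a := by
      rw [mul_sub, sub_mul, hx, mul_smul_comm, smul_mul_assoc]
    have hx'y₁ : (x - γ • a) * y₁ = y₁ * (x - γ • a) := by
      rw [← sub_eq_zero]
      have e : (x - γ • a) * y₁ - y₁ * (x - γ • a)
          = (x * y₁ - y₁ * x) - γ • (a * y₁ - y₁ * a) := by
        rw [sub_mul, mul_sub, smul_sub, smul_mul_assoc, mul_smul_comm]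
        abel
      rw [e, hδa, hγ, Algebra.algebraMap_eq_smul_one, sub_self]
    obtain ⟨β, hβ⟩ := hKer _ hx'A hx'y₁
    exact ⟨γ, β, by rw [← hβ]; abel⟩
  -- the two set equalities
  have hsetd : (M : Set Q) = {x : Q | ∃ y : Q, x = a * y - y * a} := by
    ext x
    constructor
    · intro hx
      obtain ⟨y, hy⟩ := hAd x (hMA x hx)
      exact ⟨y, by rw [hy, hd]⟩
    · rintro ⟨y, rfl⟩
      show a * y - y * a ∈ M
      rw [← hd y]; exact hd_mem y
  have hsetC : (M : Set Q) = CaC C a := by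
    ext x
    constructor
    · intro hx
      exact hCaCmem x (hMA x hx)
    · rintro ⟨α, β, rfl⟩
      have h1 : algebraMap C Q β ∈ M := hA_M _ (Algebra.commutes β a).symm
      exact Submodule.add_mem _ (Submodule.smul_mem _ _ haM) h1
  -- finrank
  haveI : Nontrivial Q := ⟨⟨a * r₀, r₀ * a, hnc0⟩⟩
  have hpair : ∀ γ ε : C, γ • (1 : Q) + ε • a = 0 → γ = 0 ∧ ε = 0 := by
    intro γ ε h
    by_cases hε : ε = 0
    · rw [hε, zero_smul, add_zero] at h
      rcases smul_eq_zero.mp h with h' | h'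
      · exact ⟨h', hε⟩
      · exact absurd h' one_ne_zero
    · exfalso
      have h' : ε • a = -(γ • (1 : Q)) := eq_neg_of_add_eq_zero_right h
      have ha1 : a = (-(ε⁻¹ * γ)) • (1 : Q) := by
        calc a = ε⁻¹ • (ε • a) := by rw [smul_smul, inv_mul_cancel₀ hε, one_smul]
        _ = ε⁻¹ • (-(γ • (1 : Q))) := by rw [h']
        _ = (-(ε⁻¹ * γ)) • (1 : Q) := by rw [smul_neg, smul_smul, neg_smul]
      apply hnc0
      rw [ha1, smul_mul_assoc, one_mul, mul_smul_comm, mul_one]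
  have hda : d a = 0 := by rw [hd, sub_self]
  have hd1 : d (1 : Q) = 0 := by rw [hd, mul_one, one_mul, sub_self]
  have hday₁ : d (a * y₁) = a := by rw [hder, hda, zero_mul, zero_add, hdy₁, mul_one]
  have hLI : LinearIndependent C ![(1 : Q), a, y₁, a * y₁] := by
    rw [Fintype.linearIndependent_iff]
    intro g hg
    rw [Fin.sum_univ_four] at hg
    simp only [Matrix.cons_val_zero, Matrix.cons_val_one, Matrix.head_cons,
      Matrix.cons_val_two, Matrix.tail_cons, Matrix.cons_val_three] at hg
    have hg2 := congrArg d hg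
    rw [hd_add, hd_add, hd_add, hd_smul, hd_smul, hd_smul, hd_smul, hd_zero,
      hda, hd1, hday₁, hdy₁, smul_zero, smul_zero, zero_add, zero_add] at hg2
    obtain ⟨h23a, h23b⟩ := hpair _ _ hg2
    rw [h23a, h23b, zero_smul, zero_smul, add_zero, add_zero] at hg
    obtain ⟨h01a, h01b⟩ := hpair _ _ hg
    intro i; fin_cases i <;> assumption
  have hSP : ⊤ ≤ Submodule.span C (Set.range ![(1 : Q), a, y₁, a * y₁]) := by
    intro q _
    obtain ⟨γ₁, β₁, hh1⟩ := hCaCmem (q - d q * y₁) (hdec q)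
    obtain ⟨γ₂, β₂, hh2⟩ := hCaCmem (d q) (hMA (d q) (hd_mem q))
    have hq : q = β₁ • (1 : Q) + γ₁ • a + β₂ • y₁ + γ₂ • (a * y₁) := by
      have e1 : q = (q - d q * y₁) + d q * y₁ := (sub_add_cancel q (d q * y₁)).symm
      rw [e1, hh1, hh2, Algebra.algebraMap_eq_smul_one, Algebra.algebraMap_eq_smul_one,
        add_mul, smul_mul_assoc, smul_mul_assoc, one_mul]
      abel
    rw [hq]
    have m0 : (1 : Q) ∈ Set.range ![(1 : Q), a, y₁, a * y₁] := ⟨0, rfl⟩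
    have m1 : a ∈ Set.range ![(1 : Q), a, y₁, a * y₁] := ⟨1, rfl⟩
    have m2 : y₁ ∈ Set.range ![(1 : Q), a, y₁, a * y₁] := ⟨2, rfl⟩
    have m3 : a * y₁ ∈ Set.range ![(1 : Q), a, y₁, a * y₁] := ⟨3, rfl⟩
    refine Submodule.add_mem _ (Submodule.add_mem _ (Submodule.add_mem _ ?_ ?_) ?_) ?_ <;>
      exact Submodule.smul_mem _ _ (Submodule.subset_span (by assumption))
  have hfr : Module.finrank C Q = 4 := by
    rw [Module.finrank_eq_card_basis (Module.Basis.mk hLI hSP)]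
    simp
  exact ⟨h2, hfr, hsetd, hsetC⟩




private theorem range_pair (u v : Q) : Set.range ![u, v] = {u, v} := by
  ext x
  simp only [Set.mem_range, Fin.exists_fin_two, Matrix.cons_val_zero, Matrix.cons_val_one,
    Matrix.head_cons, Set.mem_insert_iff, Set.mem_singleton_iff, eq_comm]

/-- (iii) implies (i). -/
private theorem mainIII {R : NonUnitalSubring Q} {L : AddSubgroup Q}
    (hpr : IsPrimeSubring R)
    (hsp : Submodule.span C (R : Set Q) = ⊤)
    (hLR : (L : Set Q) ⊆ (R : Set Q))
    (hLie : ∀ a ∈ L, ∀ r ∈ R, a * r - r * a ∈ L)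
    {a₀ r₀ : Q} (ha₀L : a₀ ∈ L) (hr₀R : r₀ ∈ R) (hnc₀ : a₀ * r₀ ≠ r₀ * a₀)
    (h3 : Module.finrank C ↥(Submodule.span C (L : Set Q)) = 2) :
    ∀ b ∈ L, ∀ c ∈ L, b * c = c * b := by
  classical
  intro b hb c hc
  by_contra hbc
  have hMQ : ∀ x : Q, ∀ u ∈ Submodule.span C (L : Set Q),
      u * x - x * u ∈ Submodule.span C (L : Set Q) := bracket_mem hsp hLie
  haveI : Nontrivial Q := ⟨⟨a₀ * r₀, r₀ * a₀, hnc₀⟩⟩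
  have hb0 : b ≠ 0 := by rintro rfl; exact hbc (by rw [zero_mul, mul_zero])
  have hc0 : c ≠ 0 := by rintro rfl; exact hbc (by rw [zero_mul, mul_zero])
  have hbcInd : LinearIndependent C ![b, c] := by
    rw [Fintype.linearIndependent_iff]
    intro g hg
    rw [Fin.sum_univ_two] at hg
    simp only [Matrix.cons_val_zero, Matrix.cons_val_one, Matrix.head_cons] at hg
    by_cases hg1 : g 1 = 0
    · rw [hg1, zero_smul, add_zero] at hg
      have hg0 : g 0 = 0 := by
        rcases smul_eq_zero.mp hg with h | h
        · exact h
        · exact absurd h hb0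
      intro i; fin_cases i <;> assumption
    · exfalso
      have hcb : c = (-(g 1)⁻¹ * g 0) • b := by
        have h' : g 1 • c = -(g 0 • b) := eq_neg_of_add_eq_zero_right hg
        calc c = (g 1)⁻¹ • (g 1 • c) := by rw [smul_smul, inv_mul_cancel₀ hg1, one_smul]
        _ = (g 1)⁻¹ • (-(g 0 • b)) := by rw [h']
        _ = (-(g 1)⁻¹ * g 0) • b := by rw [smul_neg, smul_smul, ← neg_smul, neg_mul]
      apply hbc
      rw [hcb, mul_smul_comm, smul_mul_assoc]
  haveI hfd : FiniteDimensional C ↥(Submodule.span C (L : Set Q)) :=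
    Module.finite_of_finrank_pos (by rw [h3]; norm_num)
  have hr2 : ∀ u v : Q, u ∈ Submodule.span C (L : Set Q) → v ∈ Submodule.span C (L : Set Q) →
      LinearIndependent C ![u, v] → Submodule.span C {u, v} = Submodule.span C (L : Set Q) := by
    intro u v hu hv hind
    apply Submodule.eq_of_le_of_finrank_le
    · rw [Submodule.span_le]
      rintro x (rfl | rfl)
      · exact hu
      · exact hv
    · rw [h3, ← range_pair u v, finrank_span_eq_card hind]
      norm_num
  have hbM : b ∈ Submodule.span C (L : Set Q) := Submodule.subset_span hb
  have hcM : c ∈ Submodule.span C (L : Set Q) := Submodule.subset_span hc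
  have hspbc := hr2 b c hbM hcM hbcInd
  have hpL : b * c - c * b ∈ L := hLie b hb c (hLR hc)
  obtain ⟨p, hp⟩ : ∃ p : Q, p = b * c - c * b := ⟨_, rfl⟩
  rw [← hp] at hpL
  have hp0 : p ≠ 0 := by rw [hp]; exact sub_ne_zero.mpr hbc
  have hpM : p ∈ Submodule.span C (L : Set Q) := Submodule.subset_span hpL
  obtain ⟨β', γ', hβγ⟩ : ∃ β' γ' : C, β' • b + γ' • c = p :=
    Submodule.mem_span_pair.mp (by rw [hspbc]; exact hpM)
  have hq_ex : ∃ q : Q, q ∈ Submodule.span C (L : Set Q) ∧ q ≠ 0 ∧ p * q - q * p = p := by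
    by_cases hγ : γ' = 0
    · have hβ : β' ≠ 0 := by
        rintro rfl
        exact hp0 (by rw [← hβγ, hγ, zero_smul, zero_smul, add_zero])
      refine ⟨β'⁻¹ • c, Submodule.smul_mem _ _ hcM, smul_ne_zero (inv_ne_zero hβ) hc0, ?_⟩
      have e1 : p * c - c * p = β' • p := by
        conv_lhs => rw [← hβγ, hγ]
        rw [hp]
        simp only [zero_smul, add_zero, smul_mul_assoc, mul_smul_comm]
        module
      rw [mul_smul_comm, smul_mul_assoc, ← smul_sub, e1, smul_smul, inv_mul_cancel₀ hβ,
        one_smul]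
    · refine ⟨(-γ'⁻¹) • b, Submodule.smul_mem _ _ hbM, smul_ne_zero (neg_ne_zero.mpr (inv_ne_zero hγ)) hb0, ?_⟩
      have e1 : p * b - b * p = (-γ') • p := by
        conv_lhs => rw [← hβγ]
        rw [hp]
        simp only [add_mul, mul_add, smul_mul_assoc, mul_smul_comm]
        module
      rw [mul_smul_comm, smul_mul_assoc, ← smul_sub, e1, smul_smul, neg_mul_neg,
        inv_mul_cancel₀ hγ, one_smul]
  obtain ⟨q, hqM, hq0, hpq⟩ := hq_ex
  have hpqInd : LinearIndependent C ![p, q] := by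
    rw [Fintype.linearIndependent_iff]
    intro g hg
    rw [Fin.sum_univ_two] at hg
    simp only [Matrix.cons_val_zero, Matrix.cons_val_one, Matrix.head_cons] at hg
    have e : (g 0 • p + g 1 • q) * q - q * (g 0 • p + g 1 • q) = g 0 • (p * q - q * p) := by
      simp only [add_mul, mul_add, smul_mul_assoc, mul_smul_comm]
      module
    rw [hg, zero_mul, mul_zero, sub_zero, hpq] at e
    have hg0 : g 0 = 0 := by
      rcases smul_eq_zero.mp e.symm with h | h
      · exact h
      · exact absurd h hp0
    rw [hg0, zero_smul, zero_add] at hg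
    have hg1 : g 1 = 0 := by
      rcases smul_eq_zero.mp hg with h | h
      · exact h
      · exact absurd h hq0
    intro i; fin_cases i <;> assumption
  have hsppq := hr2 p q hpM hqM hpqInd
  have hPQx : ∀ x : Q, ∃ α β : C, p * x - x * p = α • p ∧ q * x - x * q = β • p := by
    intro x
    obtain ⟨f₁, f₂, hf⟩ := Submodule.mem_span_pair.mp
      (by rw [hsppq]; exact hMQ x p hpM :
        p * x - x * p ∈ Submodule.span C ({p, q} : Set Q))
    obtain ⟨g₁, g₂, hg⟩ := Submodule.mem_span_pair.mp
      (by rw [hsppq]; exact hMQ x q hqM :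
        q * x - x * q ∈ Submodule.span C ({p, q} : Set Q))
    have hJ : p * x - x * p =
        (p * (q * x - x * q) - (q * x - x * q) * p) -
          (q * (p * x - x * p) - (p * x - x * p) * q) := by
      linear_combination (norm := noncomm_ring) x * hpq - hpq * x
    rw [← hf, ← hg] at hJ
    have e2 : p * (g₁ • p + g₂ • q) - (g₁ • p + g₂ • q) * p = g₂ • (p * q - q * p) := by
      simp only [mul_add, add_mul, smul_mul_assoc, mul_smul_comm]
      module
    have e3 : q * (f₁ • p + f₂ • q) - (f₁ • p + f₂ • q) * q = (-f₁) • (p * q - q * p) := by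
      simp only [mul_add, add_mul, smul_mul_assoc, mul_smul_comm]
      module
    rw [e2, e3, hpq] at hJ
    have e4 : (-g₂) • p + f₂ • q = 0 := by
      have h5 := hJ
      linear_combination (norm := module) h5
    have hcoef := Fintype.linearIndependent_iff.mp hpqInd ![-g₂, f₂]
      (by rw [Fin.sum_univ_two]; simpa using e4)
    have hf₂0 : f₂ = 0 := by simpa using hcoef 1
    have hg₂0 : g₂ = 0 := by
      have := hcoef 0
      simp only [Matrix.cons_val_zero, neg_eq_zero] at this
      exact this
    exact ⟨f₁, g₁, by rw [← hf, hf₂0, zero_smul, add_zero],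
      by rw [← hg, hg₂0, zero_smul, add_zero]⟩
  obtain ⟨c₂, hc₂⟩ : ∃ c₂ : C, p * p = c₂ • p := by
    obtain ⟨α, _, hα, _⟩ := hPQx (q * p)
    have e : p * (q * p) - (q * p) * p = p * p := by
      linear_combination (norm := noncomm_ring) hpq * p
    exact ⟨α, by rw [← e, hα]⟩
  have hXp : ∀ x : Q, ∃ e : C, x * p = e • p := by
    intro x
    obtain ⟨_, α₁, _, h₁⟩ := hPQx (x * p)
    obtain ⟨_, α₂, _, h₂⟩ := hPQx x
    have i1 : q * (x * p) - (x * p) * q = (q * x - x * q) * p + x * (q * p - p * q) := by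
      noncomm_ring
    have i2 : q * p - p * q = -p := by rw [← neg_sub, hpq]
    rw [h₁, h₂, i2, smul_mul_assoc, hc₂, smul_smul, mul_neg] at i1
    exact ⟨α₂ * c₂ - α₁, by linear_combination (norm := module) i1⟩
  have hfinal : ∀ x y s : Q, (x * y - y * x) * s * p = 0 := by
    intro x y s
    obtain ⟨ex, hex⟩ := hXp x
    obtain ⟨ey, hey⟩ := hXp y
    obtain ⟨es, hes⟩ := hXp s
    have e1 : (x * y) * p = (ey * ex) • p := by
      rw [mul_assoc, hey, mul_smul_comm, hex, smul_smul]
    have e2 : (y * x) * p = (ex * ey) • p := by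
      rw [mul_assoc, hex, mul_smul_comm, hey, smul_smul]
    have e3 : (x * y - y * x) * p = 0 := by
      rw [sub_mul, e1, e2, mul_comm ey ex, sub_self]
    rw [mul_assoc, hes, mul_smul_comm, e3, smul_zero]
  have hRcomm : ∀ x ∈ R, ∀ y ∈ R, x * y - y * x = 0 := by
    intro x hx y hy
    rcases hpr (x * y - y * x) (R.sub_mem (R.mul_mem hx hy) (R.mul_mem hy hx)) p (hLR hpL)
      (fun s _ => hfinal x y s) with h | h
    · exact h
    · exact absurd h hp0
  exact hnc₀ (sub_eq_zero.mp (hRcomm a₀ (hLR ha₀L) r₀ hr₀R))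

end Aux

/-- for a noncentral Lie ideal L of a prime ring R, the following are
equivalent: (i) [L, L] = 0; (ii) R is exceptional and LC = [a, RC] = Ca + C for every
noncentral a ∈ L; (iii) dim_C LC = 2. -/
theorem stmt15 (C Q : Type*) [Field C] [Ring Q] [Algebra C Q] (R : NonUnitalSubring Q)
    (hcc : IsCentralClosure C Q R)
    (L : AddSubgroup Q) (hLie : IsLieIdealOf R L) (hnc : IsNoncentral R L) :
    let I : Prop := ∀ a ∈ L, ∀ b ∈ L, a * b = b * a
    let II : Prop := IsExceptional C Q R ∧
      ∀ a ∈ L, (∃ r ∈ R, a * r ≠ r * a) →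
        ((Submodule.span C (L : Set Q) : Set Q) = {x : Q | ∃ y : Q, x = a * y - y * a} ∧
          (Submodule.span C (L : Set Q) : Set Q) = CaC C a)
    let III : Prop := Module.finrank C ↥(Submodule.span C (L : Set Q)) = 2
    (I ↔ II) ∧ (II ↔ III) := by
  obtain ⟨hpr, hsp, hcen⟩ := hcc
  obtain ⟨hLR, hLieB⟩ := hLie
  obtain ⟨a₀, ha₀L, r₀, hr₀R, hnc₀⟩ := hnc
  intro I II III
  haveI : Nontrivial Q := ⟨⟨a₀ * r₀, r₀ * a₀, hnc₀⟩⟩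
  have hI_II : I → II := by
    intro h
    obtain ⟨h2, hfr, _, _⟩ := mainI hpr hsp hcen hLR hLieB h ha₀L hr₀R hnc₀
    refine ⟨⟨fun x _ => h2 x, hfr⟩, ?_⟩
    rintro a' ha' ⟨r, hr, hne⟩
    obtain ⟨_, _, hs1, hs2⟩ := mainI hpr hsp hcen hLR hLieB h ha' hr hne
    exact ⟨hs1, hs2⟩
  have hcomm_CaC : ∀ α β α' β' : C,
      (α • a₀ + algebraMap C Q β) * (α' • a₀ + algebraMap C Q β')
        = (α' • a₀ + algebraMap C Q β') * (α • a₀ + algebraMap C Q β) := by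
    intro α β α' β'
    rw [Algebra.algebraMap_eq_smul_one, Algebra.algebraMap_eq_smul_one]
    simp only [mul_add, add_mul, smul_mul_assoc, mul_smul_comm, one_mul, mul_one, smul_smul]
    module
  have hII_I : II → I := by
    rintro ⟨_, hall⟩
    obtain ⟨hs1, hs2⟩ := hall a₀ ha₀L ⟨r₀, hr₀R, hnc₀⟩
    intro b hb c hc
    have hbM : b ∈ CaC C a₀ := by
      rw [← hs2]; exact Submodule.subset_span hb
    have hcM : c ∈ CaC C a₀ := by
      rw [← hs2]; exact Submodule.subset_span hc
    obtain ⟨α, β, hbe⟩ := hbM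
    obtain ⟨α', β', hce⟩ := hcM
    rw [hbe, hce]; exact hcomm_CaC α β α' β'
  have hII_III : II → III := by
    rintro ⟨_, hall⟩
    obtain ⟨hs1, hs2⟩ := hall a₀ ha₀L ⟨r₀, hr₀R, hnc₀⟩
    have hnc1 : ∀ γ : C, a₀ ≠ γ • (1 : Q) := by
      intro γ hγ
      apply hnc₀
      rw [hγ, smul_mul_assoc, one_mul, mul_smul_comm, mul_one]
    have hpairInd : LinearIndependent C ![a₀, (1 : Q)] := by
      rw [Fintype.linearIndependent_iff]
      intro g hg
      rw [Fin.sum_univ_two] at hg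
      simp only [Matrix.cons_val_zero, Matrix.cons_val_one, Matrix.head_cons] at hg
      by_cases h0 : g 0 = 0
      · rw [h0, zero_smul, zero_add] at hg
        have h1 : g 1 = 0 := by
          rcases smul_eq_zero.mp hg with h | h
          · exact h
          · exact absurd h one_ne_zero
        intro i; fin_cases i <;> assumption
      · exfalso
        apply hnc1 (-(g 0)⁻¹ * g 1)
        have h' : g 0 • a₀ = -(g 1 • (1 : Q)) := eq_neg_of_add_eq_zero_left hg
        calc a₀ = (g 0)⁻¹ • (g 0 • a₀) := by rw [smul_smul, inv_mul_cancel₀ h0, one_smul]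
        _ = (g 0)⁻¹ • (-(g 1 • (1 : Q))) := by rw [h']
        _ = (-(g 0)⁻¹ * g 1) • (1 : Q) := by rw [smul_neg, smul_smul, ← neg_smul, neg_mul]
    have heq : Submodule.span C (L : Set Q) = Submodule.span C ({a₀, (1 : Q)} : Set Q) := by
      apply SetLike.coe_injective
      rw [hs2]
      ext x
      rw [SetLike.mem_coe, Submodule.mem_span_pair]
      constructor
      · rintro ⟨γ, δ, hx⟩
        exact ⟨γ, δ, by rw [hx, Algebra.algebraMap_eq_smul_one]⟩
      · rintro ⟨γ, δ, hx⟩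
        exact ⟨γ, δ, by rw [← hx, Algebra.algebraMap_eq_smul_one]⟩
    show Module.finrank C ↥(Submodule.span C (L : Set Q)) = 2
    rw [heq, ← range_pair a₀ (1 : Q), finrank_span_eq_card hpairInd]
    rfl
  have hIII_II : III → II := fun h3 =>
    hI_II (mainIII hpr hsp hLR hLieB ha₀L hr₀R hnc₀ h3)
  exact ⟨⟨hI_II, hII_I⟩, ⟨hII_III, hIII_II⟩⟩
end
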